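/- Shifting first-layer mass between input edges targeting the same second-layer node preserves φ^tot: if W and W' agree on all edges outside E_1, both have positive total first-layer weight, and for every node j ∈ V_2 the sums Σ_{i∈V_1} |W_{i,j}| / S_1 and Σ_{i∈V_1} |W'_{i,j}| / S'_1 coincide (where S_1, S'_1 are the respective first-layer total absolute weights), then φ^tot(W') = φ^tot(W). -/
import Mathlib


open Finset

/-- Contiguity of an edge sequence: consecutive edges share endpoints. -/
def Contig (K : ℕ) (γ : Fin (K-1) → ℕ × ℕ) : Prop :=
  ∀ k : Fin (K-1), ∀ h : k.val + 1 < K - 1, (γ k).2 = (γ ⟨k.val + 1, h⟩).1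

instance (K : ℕ) (γ : Fin (K-1) → ℕ × ℕ) : Decidable (Contig K γ) := by
  unfold Contig; infer_instance

/-- Total connectivity: sum over all contiguous input-to-output edge sequences of
the product of edge weights. -/
noncomputable def phiTot (K : ℕ) (E : ℕ → Finset (ℕ × ℕ)) (θ : ℕ → ℕ → ℕ → ℝ) : ℝ :=
  ∑ γ ∈ (Fintype.piFinset (fun k : Fin (K-1) => E k.val)).filter (fun γ => Contig K γ),
    ∏ k : Fin (K-1), θ k.val (γ k).1 (γ k).2

/-- Total absolute weight of layer k. -/
noncomputable def Snorm (E : ℕ → Finset (ℕ × ℕ)) (W : ℕ → ℕ → ℕ → ℝ) (k : ℕ) : ℝ :=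
  ∑ e ∈ E k, |W k e.1 e.2|

/-- Per-layer normalized weights. -/
noncomputable def thetaNorm (E : ℕ → Finset (ℕ × ℕ)) (W : ℕ → ℕ → ℕ → ℝ)
    (k i j : ℕ) : ℝ :=
  |W k i j| / Snorm E W k

/-- Connectivity from the input layer to node `r` in layer `l`. -/
noncomputable def aIn (E : ℕ → Finset (ℕ × ℕ)) (θ : ℕ → ℕ → ℕ → ℝ) (l r : ℕ) : ℝ :=
  ∑ γ ∈ (Fintype.piFinset (fun k : Fin l => E k.val)).filter
      (fun γ => (∀ k : Fin l, ∀ h : k.val + 1 < l, (γ k).2 = (γ ⟨k.val + 1, h⟩).1)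
        ∧ ∀ h : 0 < l, (γ ⟨l - 1, by omega⟩).2 = r),
    ∏ k : Fin l, θ k.val (γ k).1 (γ k).2

/-- Connectivity from node `r` in layer `l` to the output layer (layer K-1). -/
noncomputable def aOut (K : ℕ) (E : ℕ → Finset (ℕ × ℕ)) (θ : ℕ → ℕ → ℕ → ℝ)
    (l r : ℕ) : ℝ :=
  ∑ γ ∈ (Fintype.piFinset (fun k : Fin (K - 1 - l) => E (l + k.val))).filter
      (fun γ => (∀ k : Fin (K - 1 - l), ∀ h : k.val + 1 < K - 1 - l,
          (γ k).2 = (γ ⟨k.val + 1, h⟩).1)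
        ∧ ∀ h : 0 < K - 1 - l, (γ ⟨0, h⟩).1 = r),
    ∏ k : Fin (K - 1 - l), θ (l + k.val) (γ k).1 (γ k).2


lemma cons_zero' {α : Type*} {m : ℕ} (e : α) (δ : Fin m → α) (j : Fin (m+1))
    (h : j.val = 0) : (Fin.cons e δ : Fin (m+1) → α) j = e := by
  have hj : j = 0 := Fin.ext h
  rw [hj, Fin.cons_zero]

lemma cons_pos' {α : Type*} {m : ℕ} (e : α) (δ : Fin m → α) (j : Fin (m+1)) (i : Fin m)
    (h : j.val = i.val + 1) : (Fin.cons e δ : Fin (m+1) → α) j = δ i := by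
  have hj : j = i.succ := Fin.ext (by simpa using h)
  rw [hj, Fin.cons_succ]

lemma decomp (m : ℕ) (E : ℕ → Finset (ℕ × ℕ)) (θ : ℕ → ℕ → ℕ → ℝ) :
    ∑ γ ∈ (Fintype.piFinset (fun k : Fin (m+1) => E k.val)).filter
        (fun γ => ∀ k : Fin (m+1), ∀ h : k.val + 1 < m+1, (γ k).2 = (γ ⟨k.val + 1, h⟩).1),
      ∏ k : Fin (m+1), θ k.val (γ k).1 (γ k).2
    = ∑ e ∈ E 0, θ 0 e.1 e.2 *
        ∑ δ ∈ (Fintype.piFinset (fun k : Fin m => E (1 + k.val))).filter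
          (fun δ => (∀ k : Fin m, ∀ h : k.val + 1 < m, (δ k).2 = (δ ⟨k.val + 1, h⟩).1)
            ∧ ∀ h : 0 < m, (δ ⟨0, h⟩).1 = e.2),
        ∏ k : Fin m, θ (1 + k.val) (δ k).1 (δ k).2 := by
  simp_rw [Finset.mul_sum]
  rw [Finset.sum_sigma']
  refine Finset.sum_bij' (fun γ _ => ⟨γ 0, fun k => γ k.succ⟩)
    (fun p _ => Fin.cons p.1 p.2) ?_ ?_ ?_ ?_ ?_
  · rintro γ hγ
    simp only [Finset.mem_filter, Fintype.mem_piFinset] at hγ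
    obtain ⟨hmem, hc⟩ := hγ
    simp only [Finset.mem_sigma, Finset.mem_filter, Fintype.mem_piFinset]
    refine ⟨hmem 0, fun k => ?_, fun k h => ?_, fun h => ?_⟩
    · rw [Nat.add_comm]; exact hmem k.succ
    · exact hc k.succ (by simp only [Fin.val_succ]; omega)
    · exact (hc 0 (by show 0 + 1 < m + 1; omega)).symm
  · rintro ⟨e, δ⟩ hp
    simp only [Finset.mem_sigma, Finset.mem_filter, Fintype.mem_piFinset] at hp
    obtain ⟨he, hd, hc, h0⟩ := hp
    simp only [Finset.mem_filter, Fintype.mem_piFinset]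
    refine ⟨fun k => ?_, fun k h => ?_⟩
    · rcases Nat.eq_zero_or_pos k.val with hk0 | hk0
      · rw [cons_zero' e δ k hk0]
        have hk : (k : ℕ) = 0 := hk0
        rw [hk]
        exact he
      · rw [cons_pos' e δ k ⟨k.val - 1, by omega⟩ (by show (k:ℕ) = (k:ℕ) - 1 + 1; omega)]
        have := hd ⟨k.val - 1, by omega⟩
        rw [show (1 + ((⟨k.val - 1, by omega⟩ : Fin m) : ℕ)) = (k : ℕ) from by
          show 1 + ((k:ℕ) - 1) = (k:ℕ); omega] at this
        exact this
    · rcases Nat.eq_zero_or_pos k.val with hk0 | hk0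
      · rw [cons_zero' e δ k hk0,
          cons_pos' e δ ⟨k.val + 1, h⟩ ⟨0, by omega⟩ (by show (k:ℕ) + 1 = 0 + 1; omega)]
        exact (h0 (by omega)).symm
      · rw [cons_pos' e δ k ⟨k.val - 1, by omega⟩ (by show (k:ℕ) = (k:ℕ) - 1 + 1; omega),
          cons_pos' e δ ⟨k.val + 1, h⟩ ⟨k.val, by omega⟩ (by show (k:ℕ) + 1 = (k:ℕ) + 1; rfl)]
        rw [hc ⟨k.val - 1, by omega⟩ (by show (k:ℕ) - 1 + 1 < m; omega)]
        congr 2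
        simp only [Fin.mk.injEq]
        omega
  · intro γ hγ
    funext k
    show (Fin.cons (γ 0) (fun k => γ k.succ) : Fin (m+1) → ℕ × ℕ) k = γ k
    rcases Nat.eq_zero_or_pos k.val with h | h
    · rw [cons_zero' _ _ k h, show k = 0 from Fin.ext h]
    · rw [cons_pos' _ _ k ⟨k.val - 1, by omega⟩ (by show (k:ℕ) = (k:ℕ) - 1 + 1; omega)]
      show γ (⟨k.val - 1, by omega⟩ : Fin m).succ = γ k
      congr 1
      simp only [Fin.ext_iff, Fin.val_succ]
      omega
  · rintro ⟨e, δ⟩ hp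
    simp [Fin.cons_succ]
  · intro γ hγ
    rw [Fin.prod_univ_succ]
    refine congrArg₂ _ rfl (Finset.prod_congr rfl fun x _ => ?_)
    show θ (↑x.succ) (γ x.succ).1 (γ x.succ).2 = θ (1 + ↑x) (γ x.succ).1 (γ x.succ).2
    rw [Fin.val_succ, Nat.add_comm]

lemma phiTot_eq (K : ℕ) (E : ℕ → Finset (ℕ × ℕ)) (θ : ℕ → ℕ → ℕ → ℝ) :
    phiTot K E θ = ∑ γ ∈ (Fintype.piFinset (fun k : Fin (K-1) => E k.val)).filter
        (fun γ => ∀ k : Fin (K-1), ∀ h : k.val + 1 < K-1, (γ k).2 = (γ ⟨k.val + 1, h⟩).1),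
      ∏ k : Fin (K-1), θ k.val (γ k).1 (γ k).2 := by
  unfold phiTot Contig
  exact Finset.sum_congr (Finset.filter_congr_decidable _ _ _) fun _ _ => rfl

/-- shifting first-layer mass between input edges targeting the
same second-layer node preserves φ^tot. -/
theorem phiTot_invariant_first_layer_shift
    (K : ℕ) (E : ℕ → Finset (ℕ × ℕ)) (W W' : ℕ → ℕ → ℕ → ℝ)
    (hagree : ∀ k, k ≠ 0 → W' k = W k)
    (hS : 0 < Snorm E W 0) (hS' : 0 < Snorm E W' 0)
    (hshift : ∀ j, ∑ e ∈ (E 0).filter (fun e => e.2 = j), thetaNorm E W 0 e.1 e.2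
      = ∑ e ∈ (E 0).filter (fun e => e.2 = j), thetaNorm E W' 0 e.1 e.2) :
    phiTot K E (thetaNorm E W') = phiTot K E (thetaNorm E W) := by
  have hSn : ∀ k, k ≠ 0 → Snorm E W' k = Snorm E W k := fun k hk => by
    unfold Snorm; rw [hagree k hk]
  have hθ : ∀ k i j, k ≠ 0 → thetaNorm E W' k i j = thetaNorm E W k i j := fun k i j hk => by
    unfold thetaNorm; rw [hagree k hk, hSn k hk]
  rw [phiTot_eq, phiTot_eq]
  cases hK : K - 1 with
  | zero => simp
  | succ m =>
    rw [decomp m E (thetaNorm E W'), decomp m E (thetaNorm E W)]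
    have hinner : ∀ r : ℕ,
        (∑ δ ∈ (Fintype.piFinset (fun k : Fin m => E (1 + k.val))).filter
          (fun δ => (∀ k : Fin m, ∀ h : k.val + 1 < m, (δ k).2 = (δ ⟨k.val + 1, h⟩).1)
            ∧ ∀ h : 0 < m, (δ ⟨0, h⟩).1 = r),
          ∏ k : Fin m, thetaNorm E W' (1 + k.val) (δ k).1 (δ k).2)
        = ∑ δ ∈ (Fintype.piFinset (fun k : Fin m => E (1 + k.val))).filter
          (fun δ => (∀ k : Fin m, ∀ h : k.val + 1 < m, (δ k).2 = (δ ⟨k.val + 1, h⟩).1)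
            ∧ ∀ h : 0 < m, (δ ⟨0, h⟩).1 = r),
          ∏ k : Fin m, thetaNorm E W (1 + k.val) (δ k).1 (δ k).2 := fun r =>
      Finset.sum_congr rfl fun δ _ => Finset.prod_congr rfl fun k _ => hθ _ _ _ (by omega)
    simp only [hinner]
    have main : ∀ A : ℕ → ℝ,
        ∑ e ∈ E 0, thetaNorm E W' 0 e.1 e.2 * A e.2
        = ∑ e ∈ E 0, thetaNorm E W 0 e.1 e.2 * A e.2 := by
      intro A
      rw [← Finset.sum_fiberwise_of_maps_to (g := Prod.snd) (t := (E 0).image Prod.snd)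
          (fun e he => Finset.mem_image_of_mem _ he)
          (fun e => thetaNorm E W' 0 e.1 e.2 * A e.2),
        ← Finset.sum_fiberwise_of_maps_to (g := Prod.snd) (t := (E 0).image Prod.snd)
          (fun e he => Finset.mem_image_of_mem _ he)
          (fun e => thetaNorm E W 0 e.1 e.2 * A e.2)]
      refine Finset.sum_congr rfl fun j hj => ?_
      have h2 : ∀ f : ℕ → ℕ → ℝ,
          (∑ e ∈ (E 0).filter (fun e => e.2 = j), f e.1 e.2 * A e.2)
          = (∑ e ∈ (E 0).filter (fun e => e.2 = j), f e.1 e.2) * A j := fun f => by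
        rw [Finset.sum_mul]
        exact Finset.sum_congr rfl fun e he => by rw [(Finset.mem_filter.mp he).2]
      rw [h2, h2, ← hshift j]
    exact main (fun r => ∑ δ ∈ (Fintype.piFinset (fun k : Fin m => E (1 + k.val))).filter
      (fun δ => (∀ k : Fin m, ∀ h : k.val + 1 < m, (δ k).2 = (δ ⟨k.val + 1, h⟩).1)
        ∧ ∀ h : 0 < m, (δ ⟨0, h⟩).1 = r),
      ∏ k : Fin m, thetaNorm E W (1 + k.val) (δ k).1 (δ k).2)
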